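/- Let X and Y be real normed spaces, and equip X × Y with the max norm. If (x,y) ∈ X × Y satisfies ‖x‖ = ‖y‖, then (x,y) is Birkhoff–James orthogonal to (x₁,y₁) if and only if (x₁ ∈ x⁺ and y₁ ∈ y⁻) or (x₁ ∈ x⁻ and y₁ ∈ y⁺). -/

import Mathlib

def posPart {X : Type*} [NormedAddCommGroup X] [NormedSpace ℝ X] (x u : X) : Prop :=
  ∀ l : ℝ, 0 ≤ l → ‖x + l • u‖ ≥ ‖x‖

def negPart {X : Type*} [NormedAddCommGroup X] [NormedSpace ℝ X] (x u : X) : Prop :=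
  ∀ l : ℝ, l ≤ 0 → ‖x + l • u‖ ≥ ‖x‖

def BJOrth {X : Type*} [NormedAddCommGroup X] [NormedSpace ℝ X] (x u : X) : Prop :=
  ∀ l : ℝ, ‖x + l • u‖ ≥ ‖x‖

private lemma convNorm {X : Type*} [NormedAddCommGroup X] [NormedSpace ℝ X] (x u : X) {s : ℝ}
    (hs0 : 0 ≤ s) (hs1 : s ≤ 1) (a b : ℝ) :
    ‖x + (s * a + (1 - s) * b) • u‖ ≤ s * ‖x + a • u‖ + (1 - s) * ‖x + b • u‖ := by
  have he : x + (s * a + (1 - s) * b) • u = s • (x + a • u) + (1 - s) • (x + b • u) := by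
    module
  rw [he]
  calc ‖s • (x + a • u) + (1 - s) • (x + b • u)‖
      ≤ ‖s • (x + a • u)‖ + ‖(1 - s) • (x + b • u)‖ := norm_add_le _ _
    _ = s * ‖x + a • u‖ + (1 - s) * ‖x + b • u‖ := by
        rw [norm_smul, norm_smul, Real.norm_of_nonneg hs0, Real.norm_of_nonneg (by linarith)]

private lemma posOrNeg {X : Type*} [NormedAddCommGroup X] [NormedSpace ℝ X] (x u : X) :
    posPart x u ∨ negPart x u := by
  by_contra hc
  push_neg at hc
  obtain ⟨hp, hn⟩ := hc
  unfold _root_.posPart at hp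
  unfold _root_.negPart at hn
  push_neg at hp hn
  obtain ⟨a, ha0, ha⟩ := hp
  obtain ⟨b, hb0, hb⟩ := hn
  have ha0' : 0 < a := by
    rcases ha0.lt_or_eq with h' | h'
    · exact h'
    · exfalso; rw [← h'] at ha; simp at ha
  have hb0' : b < 0 := by
    rcases hb0.lt_or_eq with h' | h'
    · exact h'
    · exfalso; rw [h'] at hb; simp at hb
  set s : ℝ := (-b) / (a - b) with hs
  have hab : 0 < a - b := by linarith
  have hs0 : 0 ≤ s := div_nonneg (by linarith) (by linarith)
  have hs1 : s ≤ 1 := by rw [hs, div_le_one hab]; linarith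
  have hz : s * a + (1 - s) * b = 0 := by
    field_simp [hs]
    have hsab : s * (a - b) = -b := by rw [hs]; exact div_mul_cancel₀ _ hab.ne'
    linear_combination hsab
  have := convNorm x u hs0 hs1 a b
  rw [hz] at this
  simp only [zero_smul, add_zero] at this
  have hspos : 0 < s := div_pos (by linarith) hab
  nlinarith [this, ha, hb, norm_nonneg x]

private lemma key {X Y : Type*} [NormedAddCommGroup X] [NormedSpace ℝ X]
    [NormedAddCommGroup Y] [NormedSpace ℝ Y]
    (x : X) (y : Y) (x₁ : X) (y₁ : Y) (h : ‖x‖ = ‖y‖)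
    (hBJ : ∀ l : ℝ, ‖x‖ ≤ max ‖x + l • x₁‖ ‖y + l • y₁‖)
    (hy : ¬ negPart y y₁) : negPart x x₁ := by
  unfold _root_.negPart at hy
  push_neg at hy
  obtain ⟨b, hb0, hb⟩ := hy
  have hb0' : b < 0 := by
    rcases hb0.lt_or_eq with h' | h'
    · exact h'
    · exfalso; rw [h'] at hb; simp at hb
  -- step 1 : x succeeds on [b, 0)
  have step1 : ∀ l : ℝ, b ≤ l → l < 0 → ‖x‖ ≤ ‖x + l • x₁‖ := by
    intro l hbl hl0
    have hbne : b ≠ 0 := hb0'.ne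
    have hs0 : 0 ≤ l / b := by
      rw [div_nonneg_iff]; right; constructor <;> linarith
    have hs1 : l / b ≤ 1 := by
      rw [div_le_one_iff]; right; right; exact ⟨hb0', hbl⟩
    have hl : (l / b) * b + (1 - l / b) * 0 = l := by
      field_simp
      ring
    have hyf : ‖y + l • y₁‖ < ‖y‖ := by
      have := convNorm y y₁ hs0 hs1 b 0
      rw [hl] at this
      simp only [zero_smul, add_zero] at this
      have hspos : 0 < l / b := by
        rw [lt_div_iff_of_neg hb0']; simpa
      nlinarith
    rcases le_max_iff.mp (hBJ l) with h' | h'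
    · exact h'
    · exfalso; rw [h] at h'; linarith
  intro l hl0
  rcases lt_trichotomy l 0 with hl | hl | hl
  · rcases le_or_gt b l with hbl | hbl
    · exact step1 l hbl hl
    · -- l < b < 0 : extend success at b
      have hxb : ‖x‖ ≤ ‖x + b • x₁‖ := step1 b le_rfl hb0'
      have hl0' : l < 0 := hl
      have hlne : l ≠ 0 := hl0'.ne
      have hs0 : 0 ≤ b / l := by
        rw [div_nonneg_iff]; right; constructor <;> linarith
      have hs1 : b / l ≤ 1 := by
        rw [div_le_one_iff]; right; right; exact ⟨hl0', hbl.le⟩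
      have heq : (b / l) * l + (1 - b / l) * 0 = b := by field_simp; ring
      have := convNorm x x₁ hs0 hs1 l 0
      rw [heq] at this
      simp only [zero_smul, add_zero] at this
      have hspos : 0 < b / l := by
        rw [lt_div_iff_of_neg hl0']; simpa
      nlinarith
  · simp [hl]
  · linarith

private lemma posNegNeg {X : Type*} [NormedAddCommGroup X] [NormedSpace ℝ X] (x u : X) :
    posPart x u ↔ negPart x (-u) := by
  constructor
  · intro hp l hl
    have := hp (-l) (by linarith)
    simpa [smul_neg] using this
  · intro hn l hl
    have := hn (-l) (by linarith)
    simpa [smul_neg] using this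

/-- If `‖x‖ = ‖y‖` then `(x,y)^⊥ = (x⁺ × y⁻) ∪ (x⁻ × y⁺)` in the max-norm product. -/
theorem statement3 {X Y : Type*} [NormedAddCommGroup X] [NormedSpace ℝ X]
    [NormedAddCommGroup Y] [NormedSpace ℝ Y]
    (x : X) (y : Y) (h : ‖x‖ = ‖y‖) (x₁ : X) (y₁ : Y) :
    BJOrth ((x, y) : X × Y) (x₁, y₁) ↔
      (posPart x x₁ ∧ negPart y y₁) ∨ (negPart x x₁ ∧ posPart y y₁) := by
  have hBJiff : BJOrth ((x, y) : X × Y) (x₁, y₁) ↔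
      ∀ l : ℝ, ‖x‖ ≤ max ‖x + l • x₁‖ ‖y + l • y₁‖ := by
    unfold BJOrth
    constructor <;> intro hb l <;>
    · have := hb l
      simp only [Prod.smul_mk, Prod.mk_add_mk, Prod.norm_def, ← h, max_self] at this ⊢
      exact this
  rw [hBJiff]
  constructor
  · intro hBJ
    -- swapped version of hBJ
    have hBJ' : ∀ l : ℝ, ‖y‖ ≤ max ‖y + l • y₁‖ ‖x + l • x₁‖ := by
      intro l; rw [max_comm, ← h]; exact hBJ l
    -- negated versions
    have hBJn : ∀ l : ℝ, ‖x‖ ≤ max ‖x + l • (-x₁)‖ ‖y + l • (-y₁)‖ := by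
      intro l
      have := hBJ (-l)
      simpa [smul_neg] using this
    have hBJn' : ∀ l : ℝ, ‖y‖ ≤ max ‖y + l • (-y₁)‖ ‖x + l • (-x₁)‖ := by
      intro l; rw [max_comm, ← h]; exact hBJn l
    by_cases hny : negPart y y₁
    · by_cases hpx : posPart x x₁
      · exact Or.inl ⟨hpx, hny⟩
      · -- ¬ posPart x : then posPart y via key (negated, swapped)
        have hpy : posPart y y₁ := by
          rw [posNegNeg]
          exact key y x (-y₁) (-x₁) h.symm hBJn' (by rw [← posNegNeg]; exact hpx)
        have hnx : negPart x x₁ := (posOrNeg x x₁).resolve_left hpx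
        exact Or.inr ⟨hnx, hpy⟩
    · have hnx : negPart x x₁ := key x y x₁ y₁ h hBJ hny
      have hpy : posPart y y₁ := (posOrNeg y y₁).resolve_right hny
      exact Or.inr ⟨hnx, hpy⟩
  · rintro (⟨hpx, hny⟩ | ⟨hnx, hpy⟩) l
    · rcases le_or_gt 0 l with hl | hl
      · exact le_max_of_le_left (hpx l hl)
      · exact le_max_of_le_right (h ▸ hny l hl.le)
    · rcases le_or_gt 0 l with hl | hl
      · exact le_max_of_le_right (h ▸ hpy l hl)
      · exact le_max_of_le_left (hnx l hl.le)
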